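/- The map φ from the face poset of N(KG_{2,k}) to the chain a_1 > a_2 > ... > a_{k+4} > a, sending σ to a_i if σ ∈ X_{i,i+1} and to a if σ ∈ N(S_{2,k}), is well-defined and order-preserving: if τ ⊆ σ and τ ∈ X_{i,i+1}, then σ ∈ X_{i,i+1}. -/
import Mathlib


open Finset

/-- Potential vertices of `KG_{2,k}`: finite subsets of `[k+4]` (modelled as `ZMod (k+4)`);
actual vertices are those of cardinality 2. -/
abbrev Vtx (k : ℕ) := Finset (ZMod (k + 4))

/-- `S_σ`, the union of the pairs in `σ`. -/
def Sσ {k : ℕ} (σ : Finset (Vtx k)) : Finset (ZMod (k + 4)) := σ.sup id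

/-- `C_σ = [k+4] \ S_σ`. -/
def Cσ {k : ℕ} (σ : Finset (Vtx k)) : Finset (ZMod (k + 4)) := Finset.univ \ σ.sup id

/-- Adjacency in the Kneser graph `KG_{2,k}`: two 2-subsets that are disjoint. -/
def kgAdj {k : ℕ} (u v : Vtx k) : Prop := u.card = 2 ∧ v.card = 2 ∧ Disjoint u v

/-- A stable vertex: a 2-subset containing no two cyclically consecutive elements. -/
def IsStable {k : ℕ} (u : Vtx k) : Prop := u.card = 2 ∧ ∀ a ∈ u, a + 1 ∉ u

/-- Adjacency in `S_{2,k}`: a Kneser edge at least one of whose endpoints is stable. -/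
def sAdj {k : ℕ} (u v : Vtx k) : Prop := kgAdj u v ∧ (IsStable u ∨ IsStable v)

/-- `σ` is a face of the neighborhood complex `N(KG_{2,k})`: the members of `σ`
have a common neighbor in `KG_{2,k}`. -/
def kgFace {k : ℕ} (σ : Finset (Vtx k)) : Prop :=
  ∃ v : Vtx k, v.card = 2 ∧ ∀ u ∈ σ, kgAdj v u

/-- `σ` is a face of the neighborhood complex `N(S_{2,k})`. -/
def sFace {k : ℕ} (σ : Finset (Vtx k)) : Prop :=
  ∃ v : Vtx k, v.card = 2 ∧ ∀ u ∈ σ, sAdj v u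

/-- `X_{i,i+1}`: subsets of the `KG_{2,k}`-neighborhood of `{i,i+1}` that are not
faces of `N(S_{2,k})`. -/
def Xset {k : ℕ} (i : ZMod (k + 4)) (σ : Finset (Vtx k)) : Prop :=
  (∀ u ∈ σ, kgAdj ({i, i + 1} : Vtx k) u) ∧ ¬ sFace σ

/-- The map `φ` from the face poset of `N(KG_{2,k})` to the chain
`a_1 > a_2 > ⋯ > a_{k+4} > a`, sending `σ ∈ X_{i,i+1}` to `a_i` and
`σ ∈ N(S_{2,k})` to `a`, is well-defined and order-preserving; the key content:
if `τ ⊆ σ` are faces of `N(KG_{2,k})` and `τ ∈ X_{i,i+1}`, then `σ ∈ X_{i,i+1}`. -/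
theorem X_upward_closed {k : ℕ} (i : ZMod (k + 4)) (τ σ : Finset (Vtx k))
    (hσ : kgFace σ) (hsub : τ ⊆ σ) (hτ : Xset i τ) : Xset i σ := by
  obtain ⟨hτadj, hτns⟩ := hτ
  obtain ⟨v, hv2, hvadj⟩ := hσ
  haveI : NeZero (k + 4) := ⟨by omega⟩
  have hnum : ∀ m : ℕ, 0 < m → m < 4 → ((m : ZMod (k + 4)) ≠ 0) := by
    intro m hm1 hm2
    rw [Ne, ZMod.natCast_eq_zero_iff]
    intro h
    have := Nat.le_of_dvd hm1 h
    omega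
  have h1 : (1 : ZMod (k + 4)) ≠ 0 := by
    have := hnum 1 one_pos (by norm_num); simpa using this
  have h2 : (2 : ZMod (k + 4)) ≠ 0 := by
    have := hnum 2 two_pos (by norm_num); simpa using this
  have h3 : (3 : ZMod (k + 4)) ≠ 0 := by
    have := hnum 3 (by norm_num) (by norm_num); simpa using this
  have hii : i ≠ i + 1 := fun h => h1 (by linear_combination -h)
  have hcard : ({i, i + 1} : Vtx k).card = 2 := Finset.card_pair hii
  have hveq : v = ({i, i + 1} : Vtx k) := by
    by_contra hne
    have hnsub : ¬ v ⊆ ({i, i + 1} : Vtx k) := fun hs =>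
      hne (Finset.eq_of_subset_of_card_le hs (by rw [hv2, hcard]))
    obtain ⟨x, hxv, hxni⟩ := Finset.not_subset.mp hnsub
    simp only [Finset.mem_insert, Finset.mem_singleton, not_or] at hxni
    obtain ⟨hxi, hxi1⟩ := hxni
    -- x not in any u ∈ τ
    have hxu : ∀ u ∈ τ, x ∉ u := fun u hu =>
      Finset.disjoint_left.mp (hvadj u (hsub hu)).2.2 hxv
    have hiu : ∀ u ∈ τ, i ∉ u := fun u hu =>
      Finset.disjoint_left.mp (hτadj u hu).2.2 (by simp)
    have hi1u : ∀ u ∈ τ, i + 1 ∉ u := fun u hu =>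
      Finset.disjoint_left.mp (hτadj u hu).2.2 (by simp)
    apply hτns
    by_cases hxm : x + 1 = i
    · -- use w = {i+1, x}
      refine ⟨{i + 1, x}, Finset.card_pair (fun h => h2 (by linear_combination h + hxm)), ?_⟩
      intro u hu
      refine ⟨⟨Finset.card_pair (fun h => h2 (by linear_combination h + hxm)),
        (hτadj u hu).2.1, ?_⟩, Or.inl ⟨Finset.card_pair
          (fun h => h2 (by linear_combination h + hxm)), ?_⟩⟩
      · rw [Finset.disjoint_left]
        intro a ha
        simp only [Finset.mem_insert, Finset.mem_singleton] at ha
        rcases ha with rfl | rfl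
        · exact hi1u u hu
        · exact hxu u hu
      · intro a ha
        simp only [Finset.mem_insert, Finset.mem_singleton] at ha ⊢
        rcases ha with rfl | rfl
        · exact not_or.mpr ⟨fun h => h1 (by linear_combination h),
            fun h => h3 (by linear_combination h + hxm)⟩
        · exact not_or.mpr ⟨fun h => h1 (by linear_combination hxm - h),
            fun h => h1 (by linear_combination h)⟩
    · -- use w = {i, x}
      refine ⟨{i, x}, Finset.card_pair (Ne.symm hxi), ?_⟩
      intro u hu
      refine ⟨⟨Finset.card_pair (Ne.symm hxi), (hτadj u hu).2.1, ?_⟩,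
        Or.inl ⟨Finset.card_pair (Ne.symm hxi), ?_⟩⟩
      · rw [Finset.disjoint_left]
        intro a ha
        simp only [Finset.mem_insert, Finset.mem_singleton] at ha
        rcases ha with rfl | rfl
        · exact hiu u hu
        · exact hxu u hu
      · intro a ha
        simp only [Finset.mem_insert, Finset.mem_singleton] at ha ⊢
        rcases ha with rfl | rfl
        · exact not_or.mpr ⟨fun h => h1 (by linear_combination h),
            fun h => hxi1 h.symm⟩
        · exact not_or.mpr ⟨hxm, fun h => h1 (by linear_combination h)⟩
  constructor
  · intro u hu
    rw [← hveq]
    exact hvadj u hu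
  · rintro ⟨w, hw2, hw⟩
    exact hτns ⟨w, hw2, fun u hu => hw u (hsub hu)⟩
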